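/- Existence of the spectral limit k(λ). Assume Condition 1 (primitivity). For every λ ∈ ℝ there exists k(λ) > 0 such that for every i ∈ 𝕏 and every non-negative, not identically zero function g : 𝕏 → ℝ, (𝔼_i(e^{λ S_n} g(X_n)))^{1/n} → k(λ) as n → ∞; in particular, 𝔼_i(e^{λS_n})^{1/n} → k(λ) for every i, and the limit does not depend on i. -/

import Mathlib

/- STATEMENT 12: Existence of the spectral limit k(λ).
𝕏 finite nonempty, P stochastic, (X_n) the Markov chain with transition matrix P
under ℙ_i (started at X_0 = i), ρ : 𝕏 → ℝ, S_n = ρ(X_1)+⋯+ρ(X_n).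
Assume Condition 1 (primitivity). Then for every λ ∈ ℝ there exists k(λ) > 0 such
that for every i and every nonnegative, not identically zero g : 𝕏 → ℝ,
(𝔼_i(e^{λS_n} g(X_n)))^{1/n} → k(λ); in particular the limit does not depend on i. -/

open Finset Filter Topology MeasureTheory

set_option linter.unusedSectionVars false

namespace Stmt12

/-- Condition 1 (primitivity): some matrix power of `P` has all entries positive. -/
def Primitive {𝕏 : Type*} [Fintype 𝕏] [DecidableEq 𝕏] (P : 𝕏 → 𝕏 → ℝ) : Prop :=
  ∃ k₀ : ℕ, 1 ≤ k₀ ∧ ∀ i j, 0 < ((Matrix.of P) ^ k₀) i j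

/-! ### Auxiliary lemmas on nonnegative matrices -/

section Aux
variable {𝕏 : Type*} [Fintype 𝕏] [Nonempty 𝕏] [DecidableEq 𝕏]

lemma matpow_nonneg (A : Matrix 𝕏 𝕏 ℝ) (h : ∀ i j, 0 ≤ A i j) (n : ℕ) :
    ∀ i j, 0 ≤ (A ^ n) i j := by
  induction n with
  | zero => intro i j; rw [pow_zero, Matrix.one_apply]; split <;> norm_num
  | succ n ih =>
      intro i j; rw [pow_succ, Matrix.mul_apply]
      exact Finset.sum_nonneg fun k _ => mul_nonneg (ih i k) (h k j)

noncomputable def Mx (A : Matrix 𝕏 𝕏 ℝ) (n : ℕ) : ℝ :=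
  Finset.univ.sup' Finset.univ_nonempty fun p : 𝕏 × 𝕏 => (A ^ n) p.1 p.2

noncomputable def mx (A : Matrix 𝕏 𝕏 ℝ) (n : ℕ) : ℝ :=
  Finset.univ.inf' Finset.univ_nonempty fun p : 𝕏 × 𝕏 => (A ^ n) p.1 p.2

lemma le_Mx (A : Matrix 𝕏 𝕏 ℝ) (n : ℕ) (i j : 𝕏) : (A ^ n) i j ≤ Mx A n :=
  Finset.le_sup' (f := fun p : 𝕏 × 𝕏 => (A ^ n) p.1 p.2) (Finset.mem_univ (i, j))

lemma mx_le (A : Matrix 𝕏 𝕏 ℝ) (n : ℕ) (i j : 𝕏) : mx A n ≤ (A ^ n) i j :=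
  Finset.inf'_le (f := fun p : 𝕏 × 𝕏 => (A ^ n) p.1 p.2) (Finset.mem_univ (i, j))

lemma Mx_nonneg (A : Matrix 𝕏 𝕏 ℝ) (h : ∀ i j, 0 ≤ A i j) (n : ℕ) : 0 ≤ Mx A n := by
  obtain ⟨i⟩ := ‹Nonempty 𝕏›
  exact le_trans (matpow_nonneg A h n i i) (le_Mx A n i i)

lemma mx_nonneg (A : Matrix 𝕏 𝕏 ℝ) (h : ∀ i j, 0 ≤ A i j) (n : ℕ) : 0 ≤ mx A n :=
  Finset.le_inf' _ _ fun p _ => matpow_nonneg A h n p.1 p.2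

lemma Mx_submul (A : Matrix 𝕏 𝕏 ℝ) (h : ∀ i j, 0 ≤ A i j) (a b : ℕ) :
    Mx A (a + b) ≤ (Fintype.card 𝕏) * (Mx A a * Mx A b) := by
  apply Finset.sup'_le
  rintro ⟨i, j⟩ -
  rw [pow_add, Matrix.mul_apply]
  calc ∑ k, (A ^ a) i k * (A ^ b) k j
      ≤ ∑ _k : 𝕏, Mx A a * Mx A b := by
        refine Finset.sum_le_sum fun k _ => ?_
        exact mul_le_mul (le_Mx A a i k) (le_Mx A b k j)
          (matpow_nonneg A h b k j) (Mx_nonneg A h a)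
    _ = (Fintype.card 𝕏) * (Mx A a * Mx A b) := by
        rw [Finset.sum_const, Finset.card_univ, nsmul_eq_mul]

lemma rowsum_lower (A : Matrix 𝕏 𝕏 ℝ) (h : ∀ i j, 0 ≤ A i j) (ε : ℝ) (hε : 0 < ε)
    (hrow : ∀ i, ε ≤ ∑ j, A i j) (n : ℕ) : ∀ i, ε ^ n ≤ ∑ j, (A ^ n) i j := by
  induction n with
  | zero => intro i; simp [Matrix.one_apply]
  | succ n ih =>
      intro i
      have hA : A ^ (n + 1) = A * A ^ n := pow_succ' A n
      rw [hA]
      have : ∑ j, (A * A ^ n) i j = ∑ k, A i k * ∑ j, (A ^ n) k j := by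
        simp only [Matrix.mul_apply]
        rw [Finset.sum_comm]
        simp [Finset.mul_sum]
      rw [this]
      calc ε ^ (n + 1) = ε * ε ^ n := by ring
        _ ≤ (∑ k, A i k) * ε ^ n := by
            exact mul_le_mul_of_nonneg_right (hrow i) (le_of_lt (pow_pos hε n))
        _ = ∑ k, A i k * ε ^ n := by rw [Finset.sum_mul]
        _ ≤ ∑ k, A i k * ∑ j, (A ^ n) k j := by
            refine Finset.sum_le_sum fun k _ => ?_
            exact mul_le_mul_of_nonneg_left (ih k) (h i k)

lemma eps_le_card_Mx (A : Matrix 𝕏 𝕏 ℝ) (h : ∀ i j, 0 ≤ A i j) (ε : ℝ) (hε : 0 < ε)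
    (hrow : ∀ i, ε ≤ ∑ j, A i j) (n : ℕ) : ε ^ n ≤ (Fintype.card 𝕏) * Mx A n := by
  obtain ⟨i⟩ := ‹Nonempty 𝕏›
  calc ε ^ n ≤ ∑ j, (A ^ n) i j := rowsum_lower A h ε hε hrow n i
    _ ≤ ∑ _j : 𝕏, Mx A n := Finset.sum_le_sum fun j _ => le_Mx A n i j
    _ = (Fintype.card 𝕏) * Mx A n := by rw [Finset.sum_const, Finset.card_univ, nsmul_eq_mul]

lemma Mx_pos (A : Matrix 𝕏 𝕏 ℝ) (h : ∀ i j, 0 ≤ A i j) (ε : ℝ) (hε : 0 < ε)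
    (hrow : ∀ i, ε ≤ ∑ j, A i j) (n : ℕ) : 0 < Mx A n := by
  have h1 := eps_le_card_Mx A h ε hε hrow n
  have h2 : (0 : ℝ) < ε ^ n := pow_pos hε n
  have h3 : (0 : ℝ) < Fintype.card 𝕏 := by
    exact_mod_cast Fintype.card_pos
  nlinarith [Mx_nonneg A h n]

lemma mx_sandwich (A : Matrix 𝕏 𝕏 ℝ) (h : ∀ i j, 0 ≤ A i j) (k₀ n : ℕ) :
    mx A k₀ * mx A k₀ * Mx A n ≤ mx A (n + 2 * k₀) := by
  apply Finset.le_inf'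
  rintro ⟨i, j⟩ -
  obtain ⟨⟨a, b⟩, -, hab⟩ := Finset.exists_mem_eq_sup' (Finset.univ_nonempty)
    (fun p : 𝕏 × 𝕏 => (A ^ n) p.1 p.2)
  have hsplit : n + 2 * k₀ = k₀ + (n + k₀) := by ring
  rw [hsplit, pow_add, Matrix.mul_apply]
  have hinner : Mx A n * mx A k₀ ≤ (A ^ (n + k₀)) a j := by
    rw [pow_add, Matrix.mul_apply]
    calc Mx A n * mx A k₀ = (A ^ n) a b * mx A k₀ := by rw [Mx, hab]
      _ ≤ (A ^ n) a b * (A ^ k₀) b j :=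
          mul_le_mul_of_nonneg_left (mx_le A k₀ b j) (matpow_nonneg A h n a b)
      _ ≤ ∑ k, (A ^ n) a k * (A ^ k₀) k j :=
          Finset.single_le_sum (fun k _ => mul_nonneg (matpow_nonneg A h n a k)
            (matpow_nonneg A h k₀ k j)) (Finset.mem_univ b)
  calc mx A k₀ * mx A k₀ * Mx A n = mx A k₀ * (Mx A n * mx A k₀) := by ring
    _ ≤ (A ^ k₀) i a * (A ^ (n + k₀)) a j := by
        refine mul_le_mul (mx_le A k₀ i a) hinner ?_ (matpow_nonneg A h k₀ i a)
        exact mul_nonneg (Mx_nonneg A h n) (mx_nonneg A h k₀)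
    _ ≤ ∑ k, (A ^ k₀) i k * (A ^ (n + k₀)) k j :=
        Finset.single_le_sum (fun k _ => mul_nonneg (matpow_nonneg A h k₀ i k)
          (matpow_nonneg A h (n + k₀) k j)) (Finset.mem_univ a)

end Aux

/-! ### Fekete-type limit lemmas -/

lemma tendsto_shift {a : ℕ → ℝ} {L : ℝ} (h : Tendsto (fun n => a n / n) atTop (𝓝 L)) (d : ℕ) :
    Tendsto (fun n => a (n - d) / n) atTop (𝓝 L) := by
  have hsub : Tendsto (fun n : ℕ => n - d) atTop atTop := tendsto_sub_atTop_nat d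
  have h1 : Tendsto (fun n : ℕ => a (n - d) / ((n - d : ℕ) : ℝ)) atTop (𝓝 L) := h.comp hsub
  have h2 : Tendsto (fun n : ℕ => ((n - d : ℕ) : ℝ) / n) atTop (𝓝 1) := by
    have hd : Tendsto (fun n : ℕ => 1 - (d : ℝ) / n) atTop (𝓝 1) := by
      have := tendsto_const_div_atTop_nhds_zero_nat (d : ℝ)
      simpa using (tendsto_const_nhds (x := (1:ℝ)) (f := atTop)).sub this
    refine hd.congr' ?_
    filter_upwards [eventually_ge_atTop (d + 1)] with n hn
    have hpos : 0 < n := by omega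
    have : ((n - d : ℕ) : ℝ) = (n : ℝ) - d := by
      rw [Nat.cast_sub (by omega)]
    rw [this, sub_div, div_self (by positivity)]
  have h3 := h1.mul h2
  rw [mul_one] at h3
  refine h3.congr' ?_
  filter_upwards [eventually_ge_atTop (d + 1)] with n hn
  have hnd : (0:ℕ) < n - d := by omega
  have hne : ((n - d : ℕ) : ℝ) ≠ 0 := by positivity
  field_simp

lemma log_div_tendsto (card : ℕ) (hcard : 0 < card) (M : ℕ → ℝ)
    (hMpos : ∀ n, 0 < M n)
    (hsub : ∀ a b, M (a + b) ≤ card * (M a * M b))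
    (ε : ℝ) (hε : 0 < ε) (hlow : ∀ n, ε ^ n ≤ card * M n) :
    ∃ L : ℝ, Tendsto (fun n => Real.log (M n) / n) atTop (𝓝 L) := by
  set u : ℕ → ℝ := fun n => Real.log (card * M n) with hu
  have hcR : (0:ℝ) < card := by exact_mod_cast hcard
  have hsubadd : Subadditive u := by
    intro a b
    have h1 : (0:ℝ) < card * M (a + b) := mul_pos hcR (hMpos _)
    have h2 : card * M (a + b) ≤ (card * M a) * (card * M b) := by
      have := hsub a b
      have h3 : (1:ℝ) ≤ card := by exact_mod_cast hcard
      nlinarith [ (hMpos a).le, (hMpos b).le]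
    calc u (a + b) ≤ Real.log ((card * M a) * (card * M b)) :=
          Real.log_le_log h1 h2
      _ = u a + u b := Real.log_mul (mul_pos hcR (hMpos a)).ne' (mul_pos hcR (hMpos b)).ne'
  have hbdd : BddBelow (Set.range fun n => u n / n) := by
    refine ⟨min 0 (Real.log ε), ?_⟩
    rintro x ⟨n, rfl⟩
    rcases Nat.eq_zero_or_pos n with h0 | hpos
    · subst h0; simp
    · have h1 : (n:ℝ) * Real.log ε ≤ u n := by
        have := hlow n
        calc (n:ℝ) * Real.log ε = Real.log (ε ^ n) := by rw [Real.log_pow]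
          _ ≤ Real.log (card * M n) := Real.log_le_log (pow_pos hε n) this
      have hn : (0:ℝ) < n := by exact_mod_cast hpos
      have : Real.log ε ≤ u n / n := by
        rw [le_div_iff₀ hn]; linarith [h1]
      exact le_trans (min_le_right _ _) this
  refine ⟨hsubadd.lim, ?_⟩
  have htend := hsubadd.tendsto_lim hbdd
  have hlogc : Tendsto (fun n : ℕ => Real.log card / n) atTop (𝓝 0) :=
    tendsto_const_div_atTop_nhds_zero_nat _
  have := htend.sub hlogc
  rw [sub_zero] at this
  refine this.congr ?_
  intro n
  have : u n = Real.log card + Real.log (M n) := Real.log_mul hcR.ne' (hMpos n).ne'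
  rw [this]; ring

/-! ### Path sums -/

section Paths
variable {𝕏 : Type*} [Fintype 𝕏] [Nonempty 𝕏] [DecidableEq 𝕏]

noncomputable def ext (n : ℕ) (x : Fin n → 𝕏) : ℕ → 𝕏 :=
  fun k => if h : k < n then x ⟨k, h⟩ else Classical.arbitrary 𝕏

lemma ext_cons_zero (n : ℕ) (j : 𝕏) (y : Fin n → 𝕏) :
    ext (n + 1) (Fin.cons j y) 0 = j := by
  unfold ext
  rw [dif_pos (Nat.succ_pos n)]
  exact Fin.cons_zero (α := fun _ : Fin (n + 1) => 𝕏) j y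

lemma ext_cons_succ (n : ℕ) (j : 𝕏) (y : Fin n → 𝕏) (k : ℕ) :
    ext (n + 1) (Fin.cons j y) (k + 1) = ext n y k := by
  unfold ext
  by_cases h : k < n
  · rw [dif_pos (Nat.succ_lt_succ h), dif_pos h]
    exact Fin.cons_succ (α := fun _ : Fin (n + 1) => 𝕏) j y ⟨k, h⟩
  · rw [dif_neg (by omega), dif_neg h]

lemma ext_app (n : ℕ) (x : Fin n → 𝕏) (m : Fin n) : ext n x m = x m := by
  unfold ext
  rw [dif_pos m.isLt]

lemma key_sum (Q : Matrix 𝕏 𝕏 ℝ) : ∀ n, 1 ≤ n → ∀ (i : 𝕏) (g : 𝕏 → ℝ),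
    ∑ x : Fin n → 𝕏,
      (∏ k ∈ Finset.range n, Q (if k = 0 then i else ext n x (k - 1)) (ext n x k)) *
        g (ext n x (n - 1)) = (Q ^ n).mulVec g i := by
  intro n hn
  induction n, hn using Nat.le_induction with
  | base =>
      intro i g
      have hx : ∀ x : Fin 1 → 𝕏,
          (∏ k ∈ Finset.range 1, Q (if k = 0 then i else ext 1 x (k - 1)) (ext 1 x k)) *
            g (ext 1 x (1 - 1)) = Q i (x 0) * g (x 0) := by
        intro x
        rw [Finset.prod_range_one]
        have h0 : ext 1 x 0 = x 0 := ext_app 1 x 0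
        simp [h0]
      calc ∑ x : Fin 1 → 𝕏,
            (∏ k ∈ Finset.range 1, Q (if k = 0 then i else ext 1 x (k - 1)) (ext 1 x k)) *
              g (ext 1 x (1 - 1))
          = ∑ x : Fin 1 → 𝕏, Q i (x 0) * g (x 0) := Finset.sum_congr rfl fun x _ => hx x
        _ = ∑ j : 𝕏, Q i j * g j :=
            Fintype.sum_equiv (Equiv.funUnique (Fin 1) 𝕏) _ _ (fun x => rfl)
        _ = (Q ^ 1).mulVec g i := by
            rw [pow_one]; simp [Matrix.mulVec, dotProduct]
  | succ n hn ih =>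
      intro i g
      have hterm : ∀ (j : 𝕏) (y : Fin n → 𝕏),
          (∏ k ∈ Finset.range (n + 1),
              Q (if k = 0 then i else ext (n + 1) (Fin.cons j y) (k - 1))
                (ext (n + 1) (Fin.cons j y) k)) *
            g (ext (n + 1) (Fin.cons j y) (n + 1 - 1)) =
          Q i j * ((∏ k ∈ Finset.range n,
              Q (if k = 0 then j else ext n y (k - 1)) (ext n y k)) *
            g (ext n y (n - 1))) := by
        intro j y
        have hprod : (∏ k ∈ Finset.range (n + 1),
            Q (if k = 0 then i else ext (n + 1) (Fin.cons j y) (k - 1))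
              (ext (n + 1) (Fin.cons j y) k)) =
            (∏ k ∈ Finset.range n,
              Q (if k = 0 then j else ext n y (k - 1)) (ext n y k)) * Q i j := by
          rw [Finset.prod_range_succ']
          congr 1
          · refine Finset.prod_congr rfl fun k _ => ?_
            rw [ext_cons_succ]
            congr 1
            rcases k with _ | m
            · simp [ext_cons_zero]
            · rw [if_neg (by omega), if_neg (by omega)]
              simp only [Nat.add_sub_cancel]
              exact ext_cons_succ n j y m
        have hlast : ext (n + 1) (Fin.cons j y) (n + 1 - 1) = ext n y (n - 1) := by
          have h1 : n + 1 - 1 = (n - 1) + 1 := by omega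
          rw [h1, ext_cons_succ]
        rw [hprod, hlast]
        ring
      calc ∑ x : Fin (n + 1) → 𝕏,
            (∏ k ∈ Finset.range (n + 1),
              Q (if k = 0 then i else ext (n + 1) x (k - 1)) (ext (n + 1) x k)) *
              g (ext (n + 1) x (n + 1 - 1))
          = ∑ p : 𝕏 × (Fin n → 𝕏),
            (∏ k ∈ Finset.range (n + 1),
              Q (if k = 0 then i else ext (n + 1) (Fin.cons p.1 p.2) (k - 1))
                (ext (n + 1) (Fin.cons p.1 p.2) k)) *
              g (ext (n + 1) (Fin.cons p.1 p.2) (n + 1 - 1)) := by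
            rw [← Equiv.sum_comp (Fin.consEquiv (fun _ : Fin (n + 1) => 𝕏))]
            rfl
        _ = ∑ p : 𝕏 × (Fin n → 𝕏), Q i p.1 *
            ((∏ k ∈ Finset.range n,
              Q (if k = 0 then p.1 else ext n p.2 (k - 1)) (ext n p.2 k)) *
              g (ext n p.2 (n - 1))) := Finset.sum_congr rfl fun p _ => hterm p.1 p.2
        _ = ∑ j : 𝕏, Q i j * (Q ^ n).mulVec g j := by
            rw [Fintype.sum_prod_type]
            refine Finset.sum_congr rfl fun j _ => ?_
            dsimp only
            rw [← Finset.mul_sum, ih j g]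
        _ = (Q ^ (n + 1)).mulVec g i := by
            have hps : Q ^ (n + 1) = Q * Q ^ n := pow_succ' Q n
            rw [hps, ← Matrix.mulVec_mulVec]
            simp [Matrix.mulVec, dotProduct]

variable [MeasurableSpace 𝕏] [MeasurableSingletonClass 𝕏]

lemma integral_eq_sum (P : 𝕏 → 𝕏 → ℝ) (hP_nonneg : ∀ i j, 0 ≤ P i j)
    {Ω : Type*} [MeasurableSpace Ω] (μ : Measure Ω) [IsProbabilityMeasure μ]
    (X : ℕ → Ω → 𝕏) (hX : ∀ n, Measurable (X n)) (i : 𝕏)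
    (hchain : ∀ (n : ℕ) (x : ℕ → 𝕏),
      μ {ω | X 0 ω = i ∧ ∀ k < n, X (k + 1) ω = x k} =
        ENNReal.ofReal (∏ k ∈ Finset.range n, P (if k = 0 then i else x (k - 1)) (x k)))
    (lam : ℝ) (ρ : 𝕏 → ℝ) (g : 𝕏 → ℝ) (n : ℕ) (hn : 1 ≤ n) :
    ∫ ω, Real.exp (lam * ∑ m ∈ Finset.range n, ρ (X (m + 1) ω)) * g (X n ω) ∂μ =
      ∑ x : Fin n → 𝕏,
        (∏ k ∈ Finset.range n, P (if k = 0 then i else ext n x (k - 1)) (ext n x k)) *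
          (Real.exp (lam * ∑ m ∈ Finset.range n, ρ (ext n x m)) * g (ext n x (n - 1))) := by
  have hX0 : μ ({ω | X 0 ω = i}ᶜ) = 0 := by
    have h0 := hchain 0 (fun _ => i)
    simp only [Finset.range_zero, Finset.prod_empty, ENNReal.ofReal_one] at h0
    have hset : {ω | X 0 ω = i ∧ ∀ k < 0, X (k + 1) ω = i} = {ω | X 0 ω = i} := by
      ext ω; simp
    rw [hset] at h0
    have hmeas : MeasurableSet {ω | X 0 ω = i} := hX 0 (measurableSet_singleton i)
    rw [measure_compl hmeas (measure_ne_top μ _), h0, measure_univ, tsub_self]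
  set Y : Ω → (Fin n → 𝕏) := fun ω k => X (k + 1) ω with hY
  have hYm : Measurable Y := measurable_pi_lambda _ fun k => hX _
  set G : (Fin n → 𝕏) → ℝ := fun x =>
    Real.exp (lam * ∑ m ∈ Finset.range n, ρ (ext n x m)) * g (ext n x (n - 1)) with hG
  have hcomp : ∀ ω, Real.exp (lam * ∑ m ∈ Finset.range n, ρ (X (m + 1) ω)) * g (X n ω)
      = G (Y ω) := by
    intro ω
    have h1 : ∑ m ∈ Finset.range n, ρ (ext n (Y ω) m)
        = ∑ m ∈ Finset.range n, ρ (X (m + 1) ω) := by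
      refine Finset.sum_congr rfl fun m hm => ?_
      have hm' : m < n := Finset.mem_range.mp hm
      have : ext n (Y ω) m = Y ω ⟨m, hm'⟩ := ext_app n (Y ω) ⟨m, hm'⟩
      rw [this]
    have h2 : ext n (Y ω) (n - 1) = X n ω := by
      have hlt : n - 1 < n := by omega
      have : ext n (Y ω) (n - 1) = Y ω ⟨n - 1, hlt⟩ := ext_app n (Y ω) ⟨n - 1, hlt⟩
      rw [this]
      show X (n - 1 + 1) ω = X n ω
      congr 1
      omega
    rw [hG]
    dsimp only
    rw [h1, h2]
  have hfiber : ∀ x : Fin n → 𝕏, μ (Y ⁻¹' {x}) =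
      ENNReal.ofReal (∏ k ∈ Finset.range n,
        P (if k = 0 then i else ext n x (k - 1)) (ext n x k)) := by
    intro x
    have hset : Y ⁻¹' {x} ∩ {ω | X 0 ω = i} =
        {ω | X 0 ω = i ∧ ∀ k < n, X (k + 1) ω = ext n x k} := by
      ext ω
      simp only [Set.mem_inter_iff, Set.mem_preimage, Set.mem_singleton_iff, Set.mem_setOf_eq]
      constructor
      · rintro ⟨hYx, hx0⟩
        refine ⟨hx0, fun k hk => ?_⟩
        have : ext n x k = x ⟨k, hk⟩ := by unfold ext; rw [dif_pos hk]
        rw [this, ← hYx]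
      · rintro ⟨hx0, hall⟩
        refine ⟨?_, hx0⟩
        funext k
        have := hall k k.isLt
        have h2 : ext n x k = x ⟨(k : ℕ), k.isLt⟩ := by unfold ext; rw [dif_pos k.isLt]
        rw [h2] at this
        simpa using this
    rw [← measure_inter_conull hX0, hset, hchain n (ext n x)]
  haveI : IsProbabilityMeasure (μ.map Y) := Measure.isProbabilityMeasure_map hYm.aemeasurable
  have hGm : AEStronglyMeasurable G (μ.map Y) := by
    exact (measurable_of_countable G).aestronglyMeasurable
  calc ∫ ω, Real.exp (lam * ∑ m ∈ Finset.range n, ρ (X (m + 1) ω)) * g (X n ω) ∂μ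
      = ∫ ω, G (Y ω) ∂μ := by
        exact integral_congr_ae (Filter.Eventually.of_forall hcomp)
    _ = ∫ x, G x ∂(μ.map Y) := (integral_map hYm.aemeasurable hGm).symm
    _ = ∑ x : Fin n → 𝕏, ((μ.map Y) {x}).toReal • G x :=
        integral_fintype (Integrable.of_finite)
    _ = ∑ x : Fin n → 𝕏,
        (∏ k ∈ Finset.range n, P (if k = 0 then i else ext n x (k - 1)) (ext n x k)) *
          (Real.exp (lam * ∑ m ∈ Finset.range n, ρ (ext n x m)) * g (ext n x (n - 1))) := by
        refine Finset.sum_congr rfl fun x _ => ?_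
        rw [Measure.map_apply hYm (measurableSet_singleton x), hfiber x,
          ENNReal.toReal_ofReal (Finset.prod_nonneg fun k _ => hP_nonneg _ _)]
        rw [smul_eq_mul]

end Paths

theorem exists_spectral_limit
    {𝕏 : Type*} [Fintype 𝕏] [Nonempty 𝕏] [DecidableEq 𝕏]
    [MeasurableSpace 𝕏] [MeasurableSingletonClass 𝕏]
    (P : 𝕏 → 𝕏 → ℝ)
    (hP_nonneg : ∀ i j, 0 ≤ P i j) (hP_row : ∀ i, ∑ j, P i j = 1)
    (ρ : 𝕏 → ℝ)
    {Ω : Type*} [MeasurableSpace Ω]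
    (Pr : 𝕏 → Measure Ω) (hPr : ∀ i, IsProbabilityMeasure (Pr i))
    (X : ℕ → Ω → 𝕏) (hX : ∀ n, Measurable (X n))
    -- (X_n) is, under ℙ_i, the Markov chain with transition matrix P started at i:
    (hchain : ∀ i (n : ℕ) (x : ℕ → 𝕏),
      Pr i {ω | X 0 ω = i ∧ ∀ k < n, X (k + 1) ω = x k} =
        ENNReal.ofReal (∏ k ∈ Finset.range n, P (if k = 0 then i else x (k - 1)) (x k)))
    (hprim : Primitive P) :
    ∀ lam : ℝ, ∃ k : ℝ, 0 < k ∧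
      ∀ i (g : 𝕏 → ℝ), (∀ j, 0 ≤ g j) → g ≠ 0 →
        Tendsto
          (fun n : ℕ =>
            (∫ ω, Real.exp (lam * ∑ m ∈ Finset.range n, ρ (X (m + 1) ω)) * g (X n ω) ∂(Pr i))
              ^ ((n : ℝ)⁻¹))
          atTop (𝓝 k) := by
  intro lam
  classical
  obtain ⟨k₀, hk₀1, hk₀pos⟩ := hprim
  set Q : Matrix 𝕏 𝕏 ℝ := Matrix.of fun a b => P a b * Real.exp (lam * ρ b) with hQdef
  have hQ0 : ∀ a b, 0 ≤ Q a b := fun a b => mul_nonneg (hP_nonneg a b) (Real.exp_pos _).le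
  set ε : ℝ := Finset.univ.inf' Finset.univ_nonempty fun j => Real.exp (lam * ρ j) with hεdef
  have hε : 0 < ε := by
    obtain ⟨e0, -, he0⟩ := Finset.exists_mem_eq_inf' (Finset.univ_nonempty (α := 𝕏))
      fun j => Real.exp (lam * ρ j)
    rw [hεdef, he0]
    exact Real.exp_pos _
  have hεle : ∀ j, ε ≤ Real.exp (lam * ρ j) := fun j =>
    Finset.inf'_le _ (Finset.mem_univ j)
  have hrow : ∀ a, ε ≤ ∑ b, Q a b := by
    intro a
    calc ε = ε * ∑ b, P a b := by rw [hP_row a, mul_one]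
      _ = ∑ b, P a b * ε := by
          rw [Finset.mul_sum]
          exact Finset.sum_congr rfl fun b _ => mul_comm _ _
      _ ≤ ∑ b, Q a b := Finset.sum_le_sum fun b _ =>
          mul_le_mul_of_nonneg_left (hεle b) (hP_nonneg a b)
  have hQP : ∀ n a b, ε ^ n * ((Matrix.of P) ^ n) a b ≤ (Q ^ n) a b := by
    intro n
    induction n with
    | zero => intro a b; simp
    | succ n ih =>
        intro a b
        have hQs : (Q ^ (n + 1)) a b = ∑ k, (Q ^ n) a k * Q k b := by
          rw [pow_succ, Matrix.mul_apply]
        have hPs : ((Matrix.of P) ^ (n + 1)) a b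
            = ∑ k, ((Matrix.of P) ^ n) a k * (Matrix.of P) k b := by
          rw [pow_succ, Matrix.mul_apply]
        rw [hQs, hPs]
        calc ε ^ (n + 1) * ∑ k, ((Matrix.of P) ^ n) a k * (Matrix.of P) k b
            = ∑ k, (ε ^ n * ((Matrix.of P) ^ n) a k) * (P k b * ε) := by
              rw [Finset.mul_sum]
              refine Finset.sum_congr rfl fun k _ => ?_
              simp only [Matrix.of_apply]
              ring
          _ ≤ ∑ k, (Q ^ n) a k * Q k b := by
              refine Finset.sum_le_sum fun k _ => ?_
              refine mul_le_mul (ih a k) ?_ (mul_nonneg (hP_nonneg k b) hε.le)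
                (matpow_nonneg Q hQ0 n a k)
              exact mul_le_mul_of_nonneg_left (hεle b) (hP_nonneg k b)
  have hmxk : 0 < mx Q k₀ := by
    obtain ⟨⟨a, b⟩, -, hab⟩ := Finset.exists_mem_eq_inf' Finset.univ_nonempty
      (fun p : 𝕏 × 𝕏 => (Q ^ k₀) p.1 p.2)
    rw [mx, hab]
    exact lt_of_lt_of_le (mul_pos (pow_pos hε k₀) (hk₀pos a b)) (hQP k₀ a b)
  have hMpos : ∀ n, 0 < Mx Q n := Mx_pos Q hQ0 ε hε hrow
  obtain ⟨L, hL⟩ := log_div_tendsto (Fintype.card 𝕏) Fintype.card_pos (Mx Q) hMpos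
    (Mx_submul Q hQ0) ε hε (eps_le_card_Mx Q hQ0 ε hε hrow)
  refine ⟨Real.exp L, Real.exp_pos L, ?_⟩
  intro i g hg hgne
  haveI := hPr i
  obtain ⟨j₀, hj₀⟩ : ∃ j, 0 < g j := by
    by_contra hcon
    push_neg at hcon
    exact hgne (funext fun j => le_antisymm (hcon j) (hg j))
  set S : ℝ := ∑ j, g j with hS
  have hSpos : 0 < S :=
    lt_of_lt_of_le hj₀ (Finset.single_le_sum (fun j _ => hg j) (Finset.mem_univ j₀))
  set T : ℕ → ℝ := fun n => ∑ j, (Q ^ n) i j * g j with hT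
  have hTub : ∀ n, T n ≤ Mx Q n * S := by
    intro n
    rw [hT]
    dsimp only
    rw [hS, Finset.mul_sum]
    exact Finset.sum_le_sum fun j _ => mul_le_mul_of_nonneg_right (le_Mx Q n i j) (hg j)
  have hTlb : ∀ n, mx Q n * g j₀ ≤ T n := by
    intro n
    calc mx Q n * g j₀ ≤ (Q ^ n) i j₀ * g j₀ :=
          mul_le_mul_of_nonneg_right (mx_le Q n i j₀) (hg j₀)
      _ ≤ ∑ j, (Q ^ n) i j * g j :=
          Finset.single_le_sum (fun j _ => mul_nonneg (matpow_nonneg Q hQ0 n i j) (hg j))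
            (Finset.mem_univ j₀)
  set c : ℝ := mx Q k₀ * mx Q k₀ with hc
  have hcpos : 0 < c := mul_pos hmxk hmxk
  have hsand : ∀ n, 2 * k₀ ≤ n → c * Mx Q (n - 2 * k₀) ≤ mx Q n := by
    intro n hn
    have := mx_sandwich Q hQ0 k₀ (n - 2 * k₀)
    rwa [Nat.sub_add_cancel hn] at this
  have hTlow : ∀ n, 2 * k₀ ≤ n → c * Mx Q (n - 2 * k₀) * g j₀ ≤ T n := by
    intro n hn
    calc c * Mx Q (n - 2 * k₀) * g j₀ ≤ mx Q n * g j₀ :=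
          mul_le_mul_of_nonneg_right (hsand n hn) (hg j₀)
      _ ≤ T n := hTlb n
  have hTpos : ∀ n, 2 * k₀ ≤ n → 0 < T n := by
    intro n hn
    exact lt_of_lt_of_le (mul_pos (mul_pos hcpos (hMpos _)) hj₀) (hTlow n hn)
  -- limits of the log bounds
  have hup : Tendsto (fun n => Real.log (Mx Q n * S) / n) atTop (𝓝 L) := by
    have h2 := hL.add (tendsto_const_div_atTop_nhds_zero_nat (Real.log S))
    rw [add_zero] at h2
    refine h2.congr fun n => ?_
    rw [Real.log_mul (hMpos n).ne' hSpos.ne', add_div]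
  have hMshift : Tendsto (fun n => Real.log (Mx Q (n - 2 * k₀)) / n) atTop (𝓝 L) :=
    tendsto_shift hL (2 * k₀)
  have hlo : Tendsto (fun n => Real.log (c * Mx Q (n - 2 * k₀) * g j₀) / n) atTop (𝓝 L) := by
    have h2 := ((tendsto_const_div_atTop_nhds_zero_nat (Real.log c)).add hMshift).add
      (tendsto_const_div_atTop_nhds_zero_nat (Real.log (g j₀)))
    rw [zero_add, add_zero] at h2
    refine h2.congr fun n => ?_
    rw [Real.log_mul (mul_pos hcpos (hMpos _)).ne' hj₀.ne',
      Real.log_mul hcpos.ne' (hMpos _).ne']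
    ring
  have hlogT : Tendsto (fun n => Real.log (T n) / n) atTop (𝓝 L) := by
    refine tendsto_of_tendsto_of_tendsto_of_le_of_le' hlo hup ?_ ?_
    · filter_upwards [eventually_ge_atTop (2 * k₀ + 1)] with n hn
      have hn' : 2 * k₀ ≤ n := by omega
      have h1 : Real.log (c * Mx Q (n - 2 * k₀) * g j₀) ≤ Real.log (T n) :=
        Real.log_le_log (mul_pos (mul_pos hcpos (hMpos _)) hj₀) (hTlow n hn')
      gcongr
    · filter_upwards [eventually_ge_atTop (2 * k₀ + 1)] with n hn
      have hn' : 2 * k₀ ≤ n := by omega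
      have h1 : Real.log (T n) ≤ Real.log (Mx Q n * S) :=
        Real.log_le_log (hTpos n hn') (hTub n)
      gcongr
  have hTend : Tendsto (fun n : ℕ => T n ^ ((n : ℝ)⁻¹)) atTop (𝓝 (Real.exp L)) := by
    have hcomp := (Real.continuous_exp.tendsto L).comp hlogT
    refine Tendsto.congr' ?_ hcomp
    filter_upwards [eventually_ge_atTop (2 * k₀ + 1)] with n hn
    have hn' : 2 * k₀ ≤ n := by omega
    show Real.exp (Real.log (T n) / n) = T n ^ ((n : ℝ)⁻¹)
    rw [Real.rpow_def_of_pos (hTpos n hn'), div_eq_mul_inv]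
  refine Tendsto.congr' ?_ hTend
  filter_upwards [eventually_ge_atTop (max 1 (2 * k₀ + 1))] with n hn
  have hn1 : 1 ≤ n := le_trans (le_max_left _ _) hn
  have hint := integral_eq_sum P hP_nonneg (Pr i) X hX i (hchain i) lam ρ g n hn1
  have hterm : ∀ x : Fin n → 𝕏,
      (∏ k ∈ Finset.range n, P (if k = 0 then i else ext n x (k - 1)) (ext n x k)) *
        (Real.exp (lam * ∑ m ∈ Finset.range n, ρ (ext n x m)) * g (ext n x (n - 1))) =
      (∏ k ∈ Finset.range n, Q (if k = 0 then i else ext n x (k - 1)) (ext n x k)) *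
        g (ext n x (n - 1)) := by
    intro x
    have hexp : Real.exp (lam * ∑ m ∈ Finset.range n, ρ (ext n x m)) =
        ∏ m ∈ Finset.range n, Real.exp (lam * ρ (ext n x m)) := by
      rw [Finset.mul_sum, Real.exp_sum]
    rw [hexp, ← mul_assoc, ← Finset.prod_mul_distrib]
    rfl
  have hbase : T n = ∫ ω, Real.exp (lam * ∑ m ∈ Finset.range n, ρ (X (m + 1) ω)) *
      g (X n ω) ∂(Pr i) := by
    rw [hint]
    rw [Finset.sum_congr rfl fun x _ => hterm x]
    rw [key_sum Q n hn1 i g]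
    rw [hT]
    simp [Matrix.mulVec, dotProduct]
  rw [hbase]

end Stmt12
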